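/- Let G₁ and G₂ be groups and let f : G₁ → G₂ be a map satisfying f(a²ba⁻¹) = f(a)²·f(b)·f(a)⁻¹ for all a,b ∈ G₁. Then f(a³) = f(a)³ for all a ∈ G₁. -/
import Mathlib

/-- A map preserving the gyrogroup operation `a ⊙ b = a² b a⁻¹` satisfies
`f (a³) = (f a)³`. -/
theorem gyro_hom_map_cube (G₁ G₂ : Type*) [Group G₁] [Group G₂] (f : G₁ → G₂)
    (hf : ∀ a b : G₁, f (a ^ 2 * b * a⁻¹) = (f a) ^ 2 * f b * (f a)⁻¹) :
    ∀ a : G₁, f (a ^ 3) = (f a) ^ 3 := by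
  intro a
  have h1 := hf a a
  have h2 := hf a (a ^ 2)
  have e1 : a ^ 2 * a * a⁻¹ = a ^ 2 := by group
  have e2 : a ^ 2 * a ^ 2 * a⁻¹ = a ^ 3 := by group
  rw [e1] at h1
  rw [e2] at h2
  rw [h2, h1]
  group
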